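/- Let S be a numerical semigroup. Define the partial order a ≤_S b iff b − a ∈ S (for a ≤ b in ℕ). Let D_A, D_B ⊆ S be an optimal solution to the AG matdot code problem for some d, and let s ∈ S with min(D_A) ≤ s ≤ max(D_A). Then s ≤_S d if and only if s ∈ D_A. -/

import Mathlib

/-- A numerical semigroup: a cofinite additive submonoid of ℕ. -/
def IsNumericalSemigroup (S : Set ℕ) : Prop :=
  0 ∈ S ∧ (∀ a ∈ S, ∀ b ∈ S, a + b ∈ S) ∧ (Sᶜ : Set ℕ).Finite

/-- The sgConductor of a numerical semigroup: least c with [c,∞) ⊆ S. -/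
noncomputable def sgConductor (S : Set ℕ) : ℕ :=
  sInf {c | ∀ n, c ≤ n → n ∈ S}

/-- A solution to the AG matdot code problem with parameter m and sum value d. -/
def MatdotSolution (S : Set ℕ) (m : ℕ) (DA DB : Set ℕ) (d : ℕ) : Prop :=
  DA ⊆ S ∧ DB ⊆ S ∧ DA.Finite ∧ DB.Finite ∧ DA.ncard = m ∧ DB.ncard = m ∧
  {p : ℕ × ℕ | p ∈ DA ×ˢ DB ∧ p.1 + p.2 = d}.ncard = m

/-- In an optimal matdot solution, for s ∈ S with min(D_A) ≤ s ≤ max(D_A),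
one has s ≤_S d iff s ∈ D_A. -/
theorem stmt7 (S : Set ℕ) (hS : IsNumericalSemigroup S) (m : ℕ) (hm : 1 ≤ m)
    (DA DB : Set ℕ) (d : ℕ) (hsol : MatdotSolution S m DA DB d)
    (hopt : ∀ DA' DB' d', MatdotSolution S m DA' DB' d' →
      sSup DA + sSup DB ≤ sSup DA' + sSup DB')
    (s : ℕ) (hs : s ∈ S) (hlo : sInf DA ≤ s) (hhi : s ≤ sSup DA) :
    (∃ t ∈ S, s + t = d) ↔ s ∈ DA := by
  obtain ⟨hDA_S, hDB_S, hDAfin, hDBfin, hDAcard, hDBcard, hPcard⟩ := hsol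
  set P : Set (ℕ × ℕ) := {p : ℕ × ℕ | p ∈ DA ×ˢ DB ∧ p.1 + p.2 = d} with hPdef
  have hPfin : P.Finite := (hDAfin.prod hDBfin).subset (fun p hp => hp.1)
  have hDAne : DA.Nonempty := Set.nonempty_of_ncard_ne_zero (by omega)
  have hDBne : DB.Nonempty := Set.nonempty_of_ncard_ne_zero (by omega)
  -- fst '' P = DA
  have hfstinj : Set.InjOn Prod.fst P := by
    rintro ⟨a, b⟩ ⟨_, hab⟩ ⟨a', b'⟩ ⟨_, hab'⟩ h
    simp only [Set.mem_setOf_eq] at hab hab'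
    simp only at h
    subst h
    have : b = b' := by omega
    simp [this]
  have hfsteq : Prod.fst '' P = DA := by
    apply Set.eq_of_subset_of_ncard_le
    · rintro a ⟨p, ⟨hp, _⟩, rfl⟩
      exact (Set.mem_prod.mp hp).1
    · rw [Set.ncard_image_of_injOn hfstinj, hPcard, hDAcard]
    · exact hDAfin
  have key1 : ∀ a ∈ DA, a ≤ d ∧ d - a ∈ DB := by
    intro a ha
    rw [← hfsteq] at ha
    obtain ⟨⟨x, y⟩, ⟨hp, hsum⟩, rfl⟩ := ha
    obtain ⟨_, hy⟩ := Set.mem_prod.mp hp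
    simp only [Set.mem_setOf_eq] at hsum
    constructor
    · omega
    · have : d - x = y := by omega
      rw [this]; exact hy
  -- snd '' P = DB
  have hsndinj : Set.InjOn Prod.snd P := by
    rintro ⟨a, b⟩ ⟨_, hab⟩ ⟨a', b'⟩ ⟨_, hab'⟩ h
    simp only [Set.mem_setOf_eq] at hab hab'
    simp only at h
    subst h
    have : a = a' := by omega
    simp [this]
  have hsndeq : Prod.snd '' P = DB := by
    apply Set.eq_of_subset_of_ncard_le
    · rintro b ⟨p, ⟨hp, _⟩, rfl⟩
      exact (Set.mem_prod.mp hp).2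
    · rw [Set.ncard_image_of_injOn hsndinj, hPcard, hDBcard]
    · exact hDBfin
  have key2 : ∀ b ∈ DB, ∃ a ∈ DA, a + b = d := by
    intro b hb
    rw [← hsndeq] at hb
    obtain ⟨⟨x, y⟩, ⟨hp, hsum⟩, rfl⟩ := hb
    exact ⟨x, (Set.mem_prod.mp hp).1, hsum⟩
  have hInfDA : sInf DA ∈ DA := Nat.sInf_mem hDAne
  have hSupDA : sSup DA ∈ DA := hDAne.csSup_mem hDAfin
  have hSupDB_eq : sSup DB = d - sInf DA := by
    apply le_antisymm
    · apply csSup_le hDBne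
      intro b hb
      obtain ⟨a, ha, hab⟩ := key2 b hb
      have := Nat.sInf_le ha
      omega
    · exact le_csSup hDBfin.bddAbove (key1 _ hInfDA).2
  constructor
  · rintro ⟨t, ht, hst⟩
    by_contra hsnot
    have hsltM : s < sSup DA := lt_of_le_of_ne hhi (fun h => hsnot (h ▸ hSupDA))
    set DA' : Set ℕ := insert s (DA \ {sSup DA}) with hDA'def
    have hDA'fin : DA'.Finite := hDAfin.diff.insert _
    have hDA'ne : DA'.Nonempty := ⟨s, Set.mem_insert _ _⟩
    have hsnotdiff : s ∉ DA \ {sSup DA} := fun h => hsnot h.1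
    have hDA'card : DA'.ncard = m := by
      rw [Set.ncard_insert_of_notMem hsnotdiff hDAfin.diff,
        Set.ncard_diff_singleton_of_mem hSupDA, hDAcard]
      omega
    have hDA'S : DA' ⊆ S :=
      Set.insert_subset hs (Set.diff_subset.trans hDA_S)
    have hDA'le : ∀ a ∈ DA', a ≤ d ∧ d - a ∈ S := by
      rintro a (rfl | ⟨ha, _⟩)
      · refine ⟨by omega, ?_⟩
        have : d - a = t := by omega
        rw [this]; exact ht
      · obtain ⟨h1, h2⟩ := key1 a ha
        exact ⟨h1, hDB_S h2⟩
    set DB' : Set ℕ := (fun a => d - a) '' DA' with hDB'def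
    have hinj' : Set.InjOn (fun a => d - a) DA' := by
      intro a ha b hb h
      have h1 := (hDA'le a ha).1
      have h2 := (hDA'le b hb).1
      simp only at h
      omega
    have hDB'card : DB'.ncard = m := by
      rw [hDB'def, Set.ncard_image_of_injOn hinj', hDA'card]
    have hDB'S : DB' ⊆ S := by
      rintro b ⟨a, ha, rfl⟩
      exact (hDA'le a ha).2
    have hDB'fin : DB'.Finite := hDA'fin.image _
    have hP'eq : {p : ℕ × ℕ | p ∈ DA' ×ˢ DB' ∧ p.1 + p.2 = d}
        = (fun a => (a, d - a)) '' DA' := by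
      ext p
      simp only [Set.mem_setOf_eq, Set.mem_image, Set.mem_prod]
      constructor
      · rintro ⟨⟨hx, hy⟩, hsum⟩
        exact ⟨p.1, hx, Prod.ext rfl (by simp only; omega)⟩
      · rintro ⟨a, ha, rfl⟩
        have := (hDA'le a ha).1
        exact ⟨⟨ha, ⟨a, ha, rfl⟩⟩, by simp only; omega⟩
    have hP'card : {p : ℕ × ℕ | p ∈ DA' ×ˢ DB' ∧ p.1 + p.2 = d}.ncard = m := by
      rw [hP'eq, Set.ncard_image_of_injOn (fun a _ b _ h => congrArg Prod.fst h),
        hDA'card]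
    have hsol' : MatdotSolution S m DA' DB' d :=
      ⟨hDA'S, hDB'S, hDA'fin, hDB'fin, hDA'card, hDB'card, hP'card⟩
    have hle := hopt DA' DB' d hsol'
    have hSupDA' : sSup DA' < sSup DA := by
      have hmem : sSup DA' ∈ DA' := hDA'ne.csSup_mem hDA'fin
      rcases hmem with h | ⟨ha, hne⟩
      · omega
      · exact lt_of_le_of_ne (le_csSup hDAfin.bddAbove ha) hne
    have hSupDB' : sSup DB' ≤ sSup DB := by
      rw [hSupDB_eq]
      apply csSup_le (hDA'ne.image _)
      rintro b ⟨a, ha, rfl⟩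
      have : sInf DA ≤ a := by
        rcases ha with rfl | ⟨ha', _⟩
        · exact hlo
        · exact Nat.sInf_le ha'
      simp only
      omega
    omega
  · intro hsDA
    obtain ⟨hle, hmem⟩ := key1 s hsDA
    exact ⟨d - s, hDB_S hmem, by omega⟩
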